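/- arXiv:1202.1987 — 4 statements merged into one kernel-verified Lean document; each statement's English description precedes it below -/
import Mathlib

section
/- Two-level uniform bound: let A be SPD on finite-dimensional V, let V_c ⊆ V be a subspace with A-orthogonal projection P, and let S : V → V be a linear smoother. Assume the approximation-smoothing estimate ‖(I − P)(S v)‖²_A ≤ η(‖v‖²_A − ‖S v‖²_A) for all v ∈ V, with η > 0. Suppose the coarse correction map C : V_c → V_c satisfies ‖v_c − C(v_c)‖²_A ≤ δ‖v_c‖²_A for all v_c ∈ V_c, where δ = η/(1+η). Then the composite error map E(v) = (S v − P(S v)) + (P(S v) − C(P(S v))) satisfies ‖E(v)‖²_A ≤ δ‖v‖²_A for all v ∈ V. -/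
open RealInnerProductSpace

theorem amli_two_level_uniform_bound
    {V : Type*} [NormedAddCommGroup V] [InnerProductSpace ℝ V] [FiniteDimensional ℝ V]
    (A : V →ₗ[ℝ] V)
    (hA_sym : ∀ x y : V, ⟪A x, y⟫ = ⟪x, A y⟫)
    (hA_pos : ∀ x : V, x ≠ 0 → 0 < ⟪A x, x⟫)
    (Vc : Submodule ℝ V) (P : V → V)
    (hP_mem : ∀ v : V, P v ∈ Vc)
    (hP_orth : ∀ v : V, ∀ wc ∈ Vc, ⟪A (v - P v), wc⟫ = 0)
    (S : V →ₗ[ℝ] V) (η : ℝ) (hη : 0 < η)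
    (happrox : ∀ v : V, ⟪A (S v - P (S v)), S v - P (S v)⟫ ≤
      η * (⟪A v, v⟫ - ⟪A (S v), S v⟫))
    (C : V → V) (hC_mem : ∀ vc ∈ Vc, C vc ∈ Vc)
    (δ : ℝ) (hδ : δ = η / (1 + η))
    (hC : ∀ vc ∈ Vc, ⟪A (vc - C vc), vc - C vc⟫ ≤ δ * ⟪A vc, vc⟫)
    (E : V → V)
    (hE : ∀ v : V, E v = (S v - P (S v)) + (P (S v) - C (P (S v)))) :
    ∀ v : V, ⟪A (E v), E v⟫ ≤ δ * ⟪A v, v⟫ := by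
  intro v
  have hη1 : 0 < 1 + η := by linarith
  have hδ1 : δ * (1 + η) = η := by rw [hδ]; field_simp
  have hδ0 : 0 ≤ δ := by rw [hδ]; positivity
  have hδlt : δ ≤ 1 := by nlinarith
  set w := S v with hw
  have hPw := hP_mem w
  set e1 := w - P w with he1
  set e2 := P w - C (P w) with he2
  have he2mem : e2 ∈ Vc := Vc.sub_mem hPw (hC_mem _ hPw)
  have hcross : ⟪A e1, e2⟫ = 0 := hP_orth w e2 he2mem
  have hcross' : ⟪A e2, e1⟫ = 0 := by
    rw [hA_sym, real_inner_comm]; exact hcross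
  have hcrossP : ⟪A e1, P w⟫ = 0 := hP_orth w (P w) hPw
  have hcrossP' : ⟪A (P w), e1⟫ = 0 := by
    rw [hA_sym, real_inner_comm]; exact hcrossP
  have hexp : ⟪A (E v), E v⟫ = ⟪A e1, e1⟫ + ⟪A e2, e2⟫ := by
    rw [hE v]
    simp only [← hw, ← he1, ← he2, map_add, inner_add_left, inner_add_right, hcross, hcross']
    ring
  have hpyth : ⟪A w, w⟫ = ⟪A e1, e1⟫ + ⟪A (P w), P w⟫ := by
    have hweq : w = e1 + P w := by simp [he1]
    calc ⟪A w, w⟫ = ⟪A (e1 + P w), e1 + P w⟫ := by rw [← hweq]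
    _ = ⟪A e1, e1⟫ + ⟪A (P w), P w⟫ := by
        simp only [map_add, inner_add_left, inner_add_right, hcrossP, hcrossP']
        ring
  have h1 : ⟪A e1, e1⟫ ≤ η * (⟪A v, v⟫ - ⟪A w, w⟫) := happrox v
  have h2 : ⟪A e2, e2⟫ ≤ δ * ⟪A (P w), P w⟫ := hC (P w) hPw
  have hb : η * ⟪A w, w⟫ = η * ⟪A e1, e1⟫ + η * ⟪A (P w), P w⟫ := by
    rw [hpyth]; ring
  have h2' : (1 + η) * ⟪A e2, e2⟫ ≤ η * ⟪A (P w), P w⟫ := by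
    calc (1 + η) * ⟪A e2, e2⟫ ≤ (1 + η) * (δ * ⟪A (P w), P w⟫) :=
          mul_le_mul_of_nonneg_left h2 (le_of_lt hη1)
      _ = η * ⟪A (P w), P w⟫ := by rw [hδ]; field_simp
  have key : (1 + η) * (⟪A e1, e1⟫ + ⟪A e2, e2⟫) ≤ η * ⟪A v, v⟫ := by
    nlinarith [mul_le_mul_of_nonneg_left h1 (le_of_lt hη)]
  rw [hexp, hδ, div_mul_eq_mul_div, le_div_iff₀ hη1]
  linarith [key]
end

section
/- Let δ̄ ∈ [0,1) and let n be a positive integer with n > 1/(1−δ̄). Then there exists δ ∈ [0,1) such that (1−δⁿ)·δ̄ + δⁿ ≤ δ. -/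
theorem amli_exists_fixed_point_delta
    (δbar : ℝ) (hδbar0 : 0 ≤ δbar) (hδbar1 : δbar < 1)
    (n : ℕ) (hn : 0 < n) (hn_large : (1 : ℝ) / (1 - δbar) < n) :
    ∃ δ : ℝ, 0 ≤ δ ∧ δ < 1 ∧ (1 - δ ^ n) * δbar + δ ^ n ≤ δ := by
  have hb0 : (0:ℝ) < 1 - δbar := by linarith
  have hnR : (0:ℝ) < n := by exact_mod_cast hn
  have h1 : 1 < (n:ℝ) * (1 - δbar) := by
    have := (div_lt_iff₀ hb0).mp hn_large
    linarith
  have hinv : 1 / (n:ℝ) < 1 - δbar := by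
    rw [div_lt_iff₀ hnR]; linarith
  set ε : ℝ := (1 - δbar) - 1 / n with hε
  have hε0 : 0 < ε := sub_pos.mpr hinv
  have hinvn : (0:ℝ) < 1 / n := by positivity
  have hε1 : ε < 1 := by rw [hε]; linarith
  refine ⟨1 - ε, by linarith, by linarith, ?_⟩
  have hpos : (0:ℝ) ≤ (1 - ε) ^ n := pow_nonneg (by linarith) n
  have key : (1 - ε) ^ n * (1 + n * ε) ≤ 1 := by
    have hbern : 1 + (n:ℝ) * ε ≤ (1 + ε) ^ n := one_add_mul_le_pow (by linarith) n
    have h3 : (1 - ε ^ 2) ^ n ≤ 1 := pow_le_one₀ (by nlinarith) (by nlinarith)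
    calc (1 - ε) ^ n * (1 + n * ε) ≤ (1 - ε) ^ n * (1 + ε) ^ n :=
          mul_le_mul_of_nonneg_left hbern hpos
      _ = (1 - ε ^ 2) ^ n := by rw [← mul_pow]; ring_nf
      _ ≤ 1 := h3
  have hnb : 1 + (n:ℝ) * ε = n * (1 - δbar) := by
    have hnn : (n:ℝ) * (1 / n) = 1 := mul_one_div_cancel hnR.ne'
    linear_combination (n:ℝ) * hε - hnn
  have hδn : (1 - ε) ^ n * (1 - δbar) ≤ 1 / n := by
    have hnb0 : (0:ℝ) < n * (1 - δbar) := mul_pos hnR hb0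
    have hle : (1 - ε) ^ n ≤ 1 / ((n:ℝ) * (1 - δbar)) := by
      rw [le_div_iff₀ hnb0, ← hnb]; exact key
    calc (1 - ε) ^ n * (1 - δbar) ≤ (1 / ((n:ℝ) * (1 - δbar))) * (1 - δbar) :=
          mul_le_mul_of_nonneg_right hle hb0.le
      _ = 1 / n := by field_simp
  nlinarith [hδn]
end

section
/- Define φ(δ) = (1 + δ + δ² + ⋯ + δ^{n−1})·δ̄ − (δ + δ² + ⋯ + δ^{n−1}) for δ̄ ∈ (0,1) and integer n ≥ 2 with n(1−δ̄) > 1. Then φ(0) > 0, φ(1) < 0, and consequently there exists δ* ∈ (0,1) with φ(δ*) = 0; moreover every δ ∈ [δ*, 1) satisfies (1−δⁿ)δ̄ + δⁿ ≤ δ. -/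
open Finset

theorem amli_phi_root_and_fixed_point
    (δbar : ℝ) (hδbar0 : 0 < δbar) (hδbar1 : δbar < 1)
    (n : ℕ) (hn : 2 ≤ n) (hn_large : 1 < (n : ℝ) * (1 - δbar))
    (φ : ℝ → ℝ)
    (hφ : ∀ δ : ℝ, φ δ =
      (∑ j ∈ Finset.range n, δ ^ j) * δbar - ∑ j ∈ Finset.Ico 1 n, δ ^ j) :
    0 < φ 0 ∧ φ 1 < 0 ∧
      ∃ δstar : ℝ, 0 < δstar ∧ δstar < 1 ∧ φ δstar = 0 ∧
        ∀ δ : ℝ, δstar ≤ δ → δ < 1 → (1 - δ ^ n) * δbar + δ ^ n ≤ δ := by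
  have hsum : ∀ δ : ℝ, ∑ j ∈ Finset.Ico 1 n, δ ^ j = (∑ j ∈ Finset.range n, δ ^ j) - 1 := by
    intro δ
    rw [Finset.range_eq_Ico, Finset.sum_eq_sum_Ico_succ_bot (by omega : 0 < n)]
    simp
  have hφ' : ∀ δ : ℝ, φ δ = (∑ j ∈ Finset.range n, δ ^ j) * (δbar - 1) + 1 := by
    intro δ; rw [hφ, hsum]; ring
  have hφ0 : φ 0 = δbar := by
    rw [hφ' 0, Finset.sum_eq_single 0]
    · simp
    · intro j _ hj; exact zero_pow hj
    · intro h; exact absurd (Finset.mem_range.2 (by omega)) h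
  have hφ1 : φ 1 = (n : ℝ) * (δbar - 1) + 1 := by
    rw [hφ' 1]; simp
  have h0 : 0 < φ 0 := by rw [hφ0]; exact hδbar0
  have h1 : φ 1 < 0 := by rw [hφ1]; nlinarith
  have hmono : ∀ a b : ℝ, 0 ≤ a → a ≤ b → φ b ≤ φ a := by
    intro a b ha hab
    rw [hφ' a, hφ' b]
    have hsumle : (∑ j ∈ Finset.range n, a ^ j) ≤ ∑ j ∈ Finset.range n, b ^ j :=
      Finset.sum_le_sum fun j _ => pow_le_pow_left₀ ha hab j
    nlinarith
  have hcontφ : Continuous φ := by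
    have : φ = fun δ => (∑ j ∈ Finset.range n, δ ^ j) * (δbar - 1) + 1 := funext hφ'
    rw [this]
    exact ((continuous_finset_sum _ fun j _ => continuous_pow j).mul continuous_const).add
      continuous_const
  have hIoo : (0 : ℝ) ∈ Set.Ioo (φ 1) (φ 0) := ⟨h1, h0⟩
  obtain ⟨δstar, hmem, heq⟩ :=
    intermediate_value_Ioo' (by norm_num : (0:ℝ) ≤ 1) hcontφ.continuousOn hIoo
  refine ⟨h0, h1, δstar, hmem.1, hmem.2, heq, ?_⟩
  intro δ hle hlt
  have hφδ : φ δ ≤ 0 := by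
    have := hmono δstar δ (le_of_lt hmem.1) hle
    rw [heq] at this; exact this
  have hgeom : (∑ j ∈ Finset.range n, δ ^ j) * (δ - 1) = δ ^ n - 1 := geom_sum_mul δ n
  have hφδ' := hφ' δ
  have h1δ : 0 < 1 - δ := by linarith
  nlinarith [mul_nonpos_of_nonpos_of_nonneg hφδ (le_of_lt h1δ)]
end

section
/- Let A be SPD on finite-dimensional V, V_c a subspace with A-orthogonal projection P, S : V → V linear, and η > 0 with ‖S v − P(S v)‖²_A ≤ η(‖v‖²_A − ‖S v‖²_A) for all v, and ‖S v‖_A ≤ ‖v‖_A. Set ρ² = η/(1+η). Then for all w ∈ V: ‖S w − P(S w)‖²_A + ρ² ‖P(S w)‖²_A ≤ ρ² ‖w‖²_A. -/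
open RealInnerProductSpace

theorem amli_strict_comparison_final_bound
    {V : Type*} [NormedAddCommGroup V] [InnerProductSpace ℝ V] [FiniteDimensional ℝ V]
    (A : V →ₗ[ℝ] V)
    (hA_sym : ∀ x y : V, ⟪A x, y⟫ = ⟪x, A y⟫)
    (hA_pos : ∀ x : V, x ≠ 0 → 0 < ⟪A x, x⟫)
    (Vc : Submodule ℝ V) (P : V → V)
    (hP_mem : ∀ v : V, P v ∈ Vc)
    (hP_orth : ∀ v : V, ∀ wc ∈ Vc, ⟪A (v - P v), wc⟫ = 0)
    (S : V →ₗ[ℝ] V) (η : ℝ) (hη : 0 < η)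
    (happrox : ∀ v : V, ⟪A (S v - P (S v)), S v - P (S v)⟫ ≤
      η * (⟪A v, v⟫ - ⟪A (S v), S v⟫))
    (hS : ∀ v : V, Real.sqrt ⟪A (S v), S v⟫ ≤ Real.sqrt ⟪A v, v⟫)
    (ρsq : ℝ) (hρ : ρsq = η / (1 + η)) :
    ∀ w : V,
      ⟪A (S w - P (S w)), S w - P (S w)⟫ + ρsq * ⟪A (P (S w)), P (S w)⟫ ≤
        ρsq * ⟪A w, w⟫ := by
  intro w
  set e := S w - P (S w) with he
  set p := P (S w) with hp
  have horth : ⟪A e, p⟫ = 0 := hP_orth (S w) p (hP_mem (S w))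
  have horth' : ⟪A p, e⟫ = 0 := by
    rw [hA_sym, real_inner_comm, horth]
  have hpyth : ⟪A (S w), S w⟫ = ⟪A e, e⟫ + ⟪A p, p⟫ := by
    have hsum : S w = e + p := by simp [he, hp]
    rw [hsum]
    simp only [map_add, inner_add_left, inner_add_right, horth, horth']
    ring
  have hbound := happrox w
  rw [hpyth] at hbound
  have h1η : 0 < 1 + η := by linarith
  rw [hρ, ← mul_le_mul_iff_right₀ h1η]
  have hne := ne_of_gt h1η
  field_simp
  nlinarith [hbound]
end
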